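/- Consider the MQMS system with ON-OFF channels (M = 1) whose channel entries are mutually independent Bernoulli random variables: for each t, the entries C_{n,k}(t) are independent with P(C_{n,k}(t) = 1) = p_{n,k}, so that π is the corresponding product distribution on S. If the system is strongly stable under some server allocation policy and the time-average arrival rate vector Ā = lim_{t→∞} (1/t) Σ_{τ=1}^t E[A(τ)] exists, then for every nonempty subset Q ⊆ {1,…,N}: Σ_{n∈Q} Ā_n ≤ K − Σ_{k=1}^K ∏_{n∈Q} (1 − p_{n,k}). -/

import Mathlib

open MeasureTheory ProbabilityTheory Finset Filter

noncomputable section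

/-- Channel state space `S`: N×K matrices with entries in {0,…,M}. -/
abbrev ChanState (N K M : ℕ) := Fin N → Fin K → Fin (M + 1)

/-- The real-valued channel matrix `C_s` of a channel state `s`. -/
def Cmat {N K M : ℕ} (s : ChanState N K M) : Fin N → Fin K → ℝ :=
  fun n k => ((s n k : ℕ) : ℝ)

/-- The 0/1 allocation matrix `I ∈ 𝓘` determined by an assignment `f` of servers to
queues: column `k` has its single 1 in row `f k`. -/
def allocMat {N K : ℕ} (f : Fin K → Fin N) : Fin N → Fin K → ℝ :=
  fun n k => if f k = n then 1 else 0

/-- The weight `Σ_n Σ_k α_n c_{n,k} I_{n,k}` of the allocation matrix `I = allocMat f`. -/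
def weight {N K : ℕ} (α : Fin N → ℝ) (c : Fin N → Fin K → ℝ) (f : Fin K → Fin N) : ℝ :=
  ∑ n, ∑ k, α n * c n k * allocMat f n k

/-- `max_{I ∈ 𝓘} Σ_n Σ_k α_n c_{n,k} I_{n,k}`. -/
def maxWeight {N K : ℕ} [NeZero N] (α : Fin N → ℝ) (c : Fin N → Fin K → ℝ) : ℝ :=
  Finset.univ.sup' Finset.univ_nonempty (weight α c)

/-- `b(α) = Σ_{s∈S} π_s max_{I∈𝓘} Σ_n Σ_k α_n (C_s)_{n,k} I_{n,k}`. -/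
def bCoef {N K M : ℕ} [NeZero N] (π : ChanState N K M → ℝ) (α : Fin N → ℝ) : ℝ :=
  ∑ s : ChanState N K M, π s * maxWeight α (Cmat s)

/-- The rate vector `R^{(g)}` of the deterministic policy `g`. -/
def rateVec {N K M : ℕ} (π : ChanState N K M → ℝ)
    (g : ChanState N K M → Fin K → Fin N) : Fin N → ℝ :=
  fun n => ∑ s : ChanState N K M, π s * ∑ k, Cmat s n k * allocMat (g s) n k

/-- The achievable-rate polytope `P`, the convex hull of the rate vectors of the
deterministic policies. -/
def ratePolytope {N K M : ℕ} (π : ChanState N K M → ℝ) : Set (Fin N → ℝ) :=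
  convexHull ℝ {r | ∃ g : ChanState N K M → Fin K → Fin N, r = rateVec π g}

/-- `W`: products of N−1 factors from {0,…,M}, viewed inside ℝ. -/
def Wset (N M : ℕ) : Set ℝ :=
  {w | ∃ m : Fin (N - 1) → ℕ, (∀ j, m j ≤ M) ∧ w = ∏ j, (m j : ℝ)}

/-- The set `V` of nonnegative weight vectors from the paper. -/
def Vset (N M : ℕ) : Set (Fin N → ℝ) :=
  {α | (∀ n, 0 ≤ α n) ∧
    ∀ U : Finset (Fin N), U.Nonempty → U ≠ Finset.univ →
      (∃ i ∈ U, α i ≠ 0) → (∃ j ∈ Uᶜ, α j ≠ 0) →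
      ∃ i ∈ U, ∃ j ∈ Uᶜ, ∃ m ∈ Finset.Icc 1 M, ∃ n ∈ Finset.Icc 1 M,
        0 < α i ∧ 0 < α j ∧ α i * (m : ℝ) = α j * (n : ℝ)}

/-- The product Bernoulli distribution on ON-OFF (M = 1) channel states. -/
def bernoulliPi {N K : ℕ} (p : Fin N → Fin K → ℝ) : ChanState N K 1 → ℝ :=
  fun s => ∏ n, ∏ k, (if (s n k : ℕ) = 1 then p n k else 1 - p n k)

end

namespace Stmt7Aux

open MeasureTheory

/-- Sum over all channel states of a full product factorizes. -/
lemma sum_prod_chan {N K : ℕ} (w : Fin N → Fin K → Fin 2 → ℝ) :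
    ∑ s : ChanState N K 1, ∏ n, ∏ k, w n k (s n k)
      = ∏ n, ∏ k, ∑ v : Fin 2, w n k v := by
  refine ((Fintype.prod_sum (fun n (g : Fin K → Fin 2) => ∏ k, w n k (g k))).symm).trans ?_
  exact Finset.prod_congr rfl fun n _ => (Fintype.prod_sum fun k (v : Fin 2) => w n k v).symm

/-- Key weighted-sum identity for the product Bernoulli distribution. -/
lemma sum_bern_prod {N K : ℕ} (p : Fin N → Fin K → ℝ) (Q : Finset (Fin N)) (k0 : Fin K) :
    ∑ s : ChanState N K 1, bernoulliPi p s * ∏ n ∈ Q, (1 - Cmat s n k0)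
      = ∏ n ∈ Q, (1 - p n k0) := by
  classical
  set w : Fin N → Fin K → Fin 2 → ℝ :=
    fun n k v => (if (v : ℕ) = 1 then p n k else 1 - p n k) *
      (if n ∈ Q then (if k = k0 then 1 - ((v : ℕ) : ℝ) else 1) else 1) with hw
  have hfac : ∀ s : ChanState N K 1,
      bernoulliPi p s * ∏ n ∈ Q, (1 - Cmat s n k0) = ∏ n, ∏ k, w n k (s n k) := by
    intro s
    have hsplit : (∏ n, ∏ k, w n k (s n k))
        = (∏ n, ∏ k, (if ((s n k : ℕ)) = 1 then p n k else 1 - p n k)) *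
          (∏ n, ∏ k, (if n ∈ Q then (if k = k0 then 1 - ((s n k : ℕ) : ℝ) else 1) else 1)) := by
      simp only [hw, Finset.prod_mul_distrib]
    have hsecond : (∏ n, ∏ k, (if n ∈ Q then (if k = k0 then 1 - ((s n k : ℕ) : ℝ) else 1) else 1))
        = ∏ n ∈ Q, (1 - Cmat s n k0) := by
      have hinner : ∀ n : Fin N,
          (∏ k, (if n ∈ Q then (if k = k0 then 1 - ((s n k : ℕ) : ℝ) else 1) else 1))
            = if n ∈ Q then 1 - Cmat s n k0 else 1 := by
        intro n
        by_cases hn : n ∈ Q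
        · simp only [hn, if_true, Cmat]
          exact (Finset.prod_ite_eq' Finset.univ k0 (fun k => 1 - ((s n k : ℕ) : ℝ))).trans
            (by simp)
        · simp [hn]
      rw [Finset.prod_congr rfl fun n _ => hinner n, Finset.prod_ite_mem, Finset.univ_inter]
    rw [hsplit, hsecond]
    rfl
  rw [Finset.sum_congr rfl fun s _ => hfac s, sum_prod_chan]
  have hsum : ∀ n k, (∑ v : Fin 2, w n k v) = if n ∈ Q then (if k = k0 then 1 - p n k else 1) else 1 := by
    intro n k
    rw [Fin.sum_univ_two]
    simp only [hw, Fin.val_zero, Fin.val_one]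
    by_cases hn : n ∈ Q <;> by_cases hk : k = k0 <;> simp [hn, hk]
  rw [Finset.prod_congr rfl fun n _ => Finset.prod_congr rfl fun k _ => hsum n k]
  have hlast : ∀ n : Fin N, (∏ k, if n ∈ Q then (if k = k0 then 1 - p n k else 1) else 1)
      = if n ∈ Q then 1 - p n k0 else 1 := by
    intro n
    by_cases hn : n ∈ Q
    · simp only [hn, if_true]
      exact (Finset.prod_ite_eq' Finset.univ k0 (fun k => 1 - p n k)).trans (by simp)
    · simp [hn]
  rw [Finset.prod_congr rfl fun n _ => hlast n, Finset.prod_ite_mem, Finset.univ_inter]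

end Stmt7Aux
namespace Stmt7Aux
open MeasureTheory

variable {N K : ℕ} {Ω : Type} [MeasurableSpace Ω] {μ : Measure Ω} [IsProbabilityMeasure μ]

lemma comp_chan_eq_sum (C : Ω → ChanState N K 1) (F : ChanState N K 1 → ℝ) (ω : Ω) :
    F (C ω) = ∑ s : ChanState N K 1, Set.indicator {ω' | C ω' = s} (fun _ => F s) ω := by
  rw [Finset.sum_eq_single (C ω)]
  · simp [Set.indicator_apply]
  · intro s _ hs
    simp [Set.indicator_apply, fun h : C ω = s => hs h.symm]
    intro h; exact absurd h.symm hs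
  · simp

lemma meas_chan_event (C : Ω → ChanState N K 1) (hC : Measurable C) (s : ChanState N K 1) :
    MeasurableSet {ω | C ω = s} := by
  have : {ω | C ω = s} = C ⁻¹' {s} := rfl
  rw [this]
  exact hC (measurableSet_singleton s)

lemma integrable_comp_chan (C : Ω → ChanState N K 1) (hC : Measurable C)
    (F : ChanState N K 1 → ℝ) : Integrable (fun ω => F (C ω)) μ := by
  have h : (fun ω => F (C ω))
      = fun ω => ∑ s : ChanState N K 1, Set.indicator {ω' | C ω' = s} (fun _ => F s) ω :=
    funext (comp_chan_eq_sum C F)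
  rw [h]
  exact integrable_finset_sum _ fun s _ =>
    (integrable_const (F s)).indicator (meas_chan_event C hC s)

lemma integral_comp_chan (C : Ω → ChanState N K 1) (hC : Measurable C)
    (q : ChanState N K 1 → ℝ) (hq : ∀ s, 0 ≤ q s)
    (hdist : ∀ s, μ {ω | C ω = s} = ENNReal.ofReal (q s))
    (F : ChanState N K 1 → ℝ) :
    ∫ ω, F (C ω) ∂μ = ∑ s : ChanState N K 1, q s * F s := by
  calc ∫ ω, F (C ω) ∂μ
      = ∑ s : ChanState N K 1, ∫ ω, Set.indicator {ω' | C ω' = s} (fun _ => F s) ω ∂μ := by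
        rw [← integral_finset_sum _ fun s _ =>
          (integrable_const (F s)).indicator (meas_chan_event C hC s)]
        exact integral_congr_ae (Filter.Eventually.of_forall (comp_chan_eq_sum C F))
    _ = ∑ s : ChanState N K 1, q s * F s := by
        refine Finset.sum_congr rfl fun s _ => ?_
        rw [integral_indicator_const _ (meas_chan_event C hC s), measureReal_def, hdist s,
          ENNReal.toReal_ofReal (hq s), smul_eq_mul]

end Stmt7Aux
namespace Stmt7Aux
open MeasureTheory

lemma Cmat_nonneg {N K : ℕ} (s : ChanState N K 1) (n : Fin N) (k : Fin K) :
    0 ≤ Cmat s n k := by unfold Cmat; positivity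

lemma Cmat_le_one {N K : ℕ} (s : ChanState N K 1) (n : Fin N) (k : Fin K) :
    Cmat s n k ≤ 1 := by
  unfold Cmat
  have := Fin.is_le (s n k)
  exact_mod_cast this

lemma allocMat_nonneg {N K : ℕ} (f : Fin K → Fin N) (n : Fin N) (k : Fin K) :
    0 ≤ allocMat f n k := by unfold allocMat; split_ifs <;> norm_num

lemma allocMat_le_one {N K : ℕ} (f : Fin K → Fin N) (n : Fin N) (k : Fin K) :
    allocMat f n k ≤ 1 := by unfold allocMat; split_ifs <;> norm_num

/-- Pointwise bound on service delivered to the set `Q`. -/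
lemma service_le {N K : ℕ} (s : ChanState N K 1) (f : Fin K → Fin N) (Q : Finset (Fin N)) :
    ∑ n ∈ Q, ∑ k, Cmat s n k * allocMat f n k
      ≤ ∑ k : Fin K, (1 - ∏ n ∈ Q, (1 - Cmat s n k)) := by
  rw [Finset.sum_comm]
  refine Finset.sum_le_sum fun k _ => ?_
  have hprod_le_one : ∏ n ∈ Q, (1 - Cmat s n k) ≤ 1 :=
    Finset.prod_le_one (fun n _ => by linarith [Cmat_le_one s n k])
      (fun n _ => by linarith [Cmat_nonneg s n k])
  have hcol : ∑ n ∈ Q, Cmat s n k * allocMat f n k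
      = if f k ∈ Q then Cmat s (f k) k else 0 := by
    rw [show (fun n => Cmat s n k * allocMat f n k)
        = fun n => if f k = n then Cmat s n k else 0 from funext fun n => by
          unfold allocMat; split_ifs <;> ring]
    exact Finset.sum_ite_eq Q (f k) (fun n => Cmat s n k)
  rw [hcol]
  split_ifs with hfk
  · have h1 : ∏ n ∈ Q, (1 - Cmat s n k) ≤ 1 - Cmat s (f k) k := by
      rw [← Finset.mul_prod_erase Q _ hfk]
      have h2 : ∏ n ∈ Q.erase (f k), (1 - Cmat s n k) ≤ 1 :=
        Finset.prod_le_one (fun n _ => by linarith [Cmat_le_one s n k])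
          (fun n _ => by linarith [Cmat_nonneg s n k])
      have h3 : 0 ≤ 1 - Cmat s (f k) k := by linarith [Cmat_le_one s (f k) k]
      nlinarith
    linarith
  · linarith

end Stmt7Aux
set_option maxHeartbeats 1600000 in
/-- for ON-OFF channels (M = 1) with mutually independent Bernoulli
entries, strong stability implies Σ_{n∈Q} Ā_n ≤ K − Σ_k ∏_{n∈Q}(1 − p_{n,k}) for every
nonempty Q ⊆ {1,…,N}. -/
theorem stmt_7
    {N K : ℕ} [NeZero N] [NeZero K]
    (p : Fin N → Fin K → ℝ) (hp : ∀ n k, p n k ∈ Set.Icc (0 : ℝ) 1)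
    {Ω : Type} [MeasurableSpace Ω] (μ : Measure Ω) [IsProbabilityMeasure μ]
    (X0 : Ω → Fin N → ℝ) (hX0m : Measurable X0) (hX0nn : ∀ ω n, 0 ≤ X0 ω n)
    (hX0int : ∀ n, Integrable (fun ω => X0 ω n) μ)
    (A : ℕ → Ω → Fin N → ℝ) (hAm : ∀ t, Measurable (A t))
    (hAnn : ∀ t ω n, 0 ≤ A t ω n)
    (Amax : ℝ)
    (hA2int : ∀ t n, Integrable (fun ω => (A t ω n) ^ 2) μ)
    (hA2 : ∀ t n, ∫ ω, (A t ω n) ^ 2 ∂μ ≤ Amax ^ 2)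
    (Cch : ℕ → Ω → ChanState N K 1) (hCm : ∀ t, Measurable (Cch t))
    (hCdist : ∀ t, 1 ≤ t → ∀ s, μ {ω | Cch t ω = s} = ENNReal.ofReal (bernoulliPi p s))
    (Ipol : ℕ → Ω → Fin K → Fin N) (hIm : ∀ t, Measurable (Ipol t))
    (X : ℕ → Ω → Fin N → ℝ) (hX0eq : X 0 = X0)
    (hXrec : ∀ t, 1 ≤ t → ∀ ω n,
      X t ω n = max (X (t - 1) ω n - ∑ k, Cmat (Cch t ω) n k * allocMat (Ipol t ω) n k) 0
        + A t ω n)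
    (hstable : ∀ n, ∃ B : ℝ, ∀ t : ℕ, 1 ≤ t →
      (∑ τ ∈ Finset.range t, ∫ ω, X τ ω n ∂μ) / t ≤ B)
    (Abar : Fin N → ℝ)
    (hAbar : ∀ n, Filter.Tendsto
      (fun t : ℕ => (∑ τ ∈ Finset.Icc 1 t, ∫ ω, A τ ω n ∂μ) / t)
      Filter.atTop (nhds (Abar n))) :
    ∀ Q : Finset (Fin N), Q.Nonempty →
      ∑ n ∈ Q, Abar n ≤ (K : ℝ) - ∑ k, ∏ n ∈ Q, (1 - p n k) := by

  classical
  intro Q hQ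
  by_contra hcon
  push_neg at hcon
  set L : ℝ := ∑ n ∈ Q, Abar n with hL
  set c : ℝ := (K : ℝ) - ∑ k, ∏ n ∈ Q, (1 - p n k) with hc
  have hbnn : ∀ s : ChanState N K 1, 0 ≤ bernoulliPi p s := by
    intro s
    unfold bernoulliPi
    refine Finset.prod_nonneg fun n _ => Finset.prod_nonneg fun k _ => ?_
    rcases hp n k with ⟨h0, h1⟩
    split_ifs <;> linarith
  set D : ℕ → Ω → Fin N → ℝ :=
    fun t ω n => ∑ k, Cmat (Cch t ω) n k * allocMat (Ipol t ω) n k with hD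
  have hDnn : ∀ t ω n, 0 ≤ D t ω n := fun t ω n =>
    Finset.sum_nonneg fun k _ =>
      mul_nonneg (Stmt7Aux.Cmat_nonneg _ _ _) (Stmt7Aux.allocMat_nonneg _ _ _)
  have hDle : ∀ t ω n, D t ω n ≤ K := by
    intro t ω n
    calc D t ω n ≤ ∑ _k : Fin K, (1:ℝ) := Finset.sum_le_sum fun k _ =>
        (mul_le_one₀ (Stmt7Aux.Cmat_le_one _ _ _) (Stmt7Aux.allocMat_nonneg _ _ _)
          (Stmt7Aux.allocMat_le_one _ _ _))
      _ = K := by simp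
  have hDm : ∀ t n, Measurable (fun ω => D t ω n) := by
    intro t n
    have h1 : Measurable fun ω => (Cch t ω, Ipol t ω) := (hCm t).prodMk (hIm t)
    have h2 : Measurable fun q : ChanState N K 1 × (Fin K → Fin N) =>
        ∑ k, Cmat q.1 n k * allocMat q.2 n k := measurable_of_countable _
    exact h2.comp h1
  have hDint : ∀ t n, Integrable (fun ω => D t ω n) μ := by
    intro t n
    refine Integrable.mono' (integrable_const (K:ℝ)) (hDm t n).aestronglyMeasurable ?_
    exact Filter.Eventually.of_forall fun ω => by
      rw [Real.norm_eq_abs, abs_of_nonneg (hDnn t ω n)]; exact hDle t ω n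
  have hAint : ∀ t n, Integrable (fun ω => A t ω n) μ := by
    intro t n
    refine Integrable.mono' ((hA2int t n).add (integrable_const 1))
      ((measurable_pi_apply n).comp (hAm t)).aestronglyMeasurable ?_
    refine Filter.Eventually.of_forall fun ω => ?_
    simp only [Pi.add_apply]
    rw [Real.norm_eq_abs, abs_of_nonneg (hAnn t ω n)]
    nlinarith [hAnn t ω n, sq_nonneg (A t ω n - 1)]
  have hXm : ∀ t, Measurable (X t) := by
    intro t
    induction t with
    | zero => rw [hX0eq]; exact hX0m
    | succ t ih =>
      have heq : X (t+1) = fun ω n =>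
          max (X t ω n - D (t+1) ω n) 0 + A (t+1) ω n := by
        funext ω n
        rw [hXrec (t+1) (Nat.le_add_left 1 t) ω n]
        simp only [Nat.add_sub_cancel, hD]
      rw [heq]
      refine measurable_pi_lambda _ fun n => ?_
      exact ((((measurable_pi_apply n).comp ih).sub (hDm (t+1) n)).max measurable_const).add
        ((measurable_pi_apply n).comp (hAm (t+1)))
  have hXnn : ∀ t ω n, 0 ≤ X t ω n := by
    intro t
    induction t with
    | zero => intro ω n; rw [hX0eq]; exact hX0nn ω n
    | succ t _ih =>
      intro ω n
      rw [hXrec (t+1) (Nat.le_add_left 1 t) ω n]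
      have h1 := hAnn (t+1) ω n
      have h2 := le_max_right (X ((t+1)-1) ω n - ∑ k, Cmat (Cch (t+1) ω) n k * allocMat (Ipol (t+1) ω) n k) (0:ℝ)
      linarith
  have hXint : ∀ t n, Integrable (fun ω => X t ω n) μ := by
    intro t
    induction t with
    | zero => intro n; rw [hX0eq]; exact hX0int n
    | succ t ih =>
      intro n
      refine Integrable.mono' ((ih n).add (hAint (t+1) n))
        ((measurable_pi_apply n).comp (hXm (t+1))).aestronglyMeasurable ?_
      refine Filter.Eventually.of_forall fun ω => ?_
      simp only [Pi.add_apply]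
      rw [Real.norm_eq_abs, abs_of_nonneg (hXnn (t+1) ω n)]
      rw [hXrec (t+1) (Nat.le_add_left 1 t) ω n]
      simp only [Nat.add_sub_cancel]
      have h1 : max (X t ω n - D (t+1) ω n) 0 ≤ X t ω n :=
        max_le (by linarith [hDnn (t+1) ω n]) (hXnn t ω n)
      simp only [hD] at h1
      linarith
  have hEserv : ∀ t, 1 ≤ t → ∑ n ∈ Q, ∫ ω, D t ω n ∂μ ≤ c := by
    intro t ht
    have hint : ∫ ω, ∑ n ∈ Q, D t ω n ∂μ = ∑ n ∈ Q, ∫ ω, D t ω n ∂μ :=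
      integral_finset_sum Q fun n _ => hDint t n
    rw [← hint]
    set F : ChanState N K 1 → ℝ := fun s => ∑ k, (1 - ∏ n ∈ Q, (1 - Cmat s n k)) with hF
    have hmono : ∫ ω, ∑ n ∈ Q, D t ω n ∂μ ≤ ∫ ω, F (Cch t ω) ∂μ := by
      refine integral_mono (integrable_finset_sum Q fun n _ => hDint t n)
        (Stmt7Aux.integrable_comp_chan (Cch t) (hCm t) F) ?_
      intro ω
      exact Stmt7Aux.service_le (Cch t ω) (Ipol t ω) Q
    refine hmono.trans_eq ?_
    rw [Stmt7Aux.integral_comp_chan (Cch t) (hCm t) (bernoulliPi p) hbnn (hCdist t ht) F]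
    have hswap : ∑ s : ChanState N K 1, bernoulliPi p s * F s
        = ∑ k : Fin K, ∑ s : ChanState N K 1,
            bernoulliPi p s * (1 - ∏ n ∈ Q, (1 - Cmat s n k)) := by
      simp only [hF, Finset.mul_sum]
      exact Finset.sum_comm
    rw [hswap, hc]
    have hone : ∑ s : ChanState N K 1, bernoulliPi p s = 1 := by
      have h0 := Stmt7Aux.sum_bern_prod p (∅ : Finset (Fin N))
        ⟨0, Nat.pos_of_ne_zero (NeZero.ne K)⟩
      simpa using h0
    have hterm : ∀ k : Fin K, ∑ s : ChanState N K 1,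
        bernoulliPi p s * (1 - ∏ n ∈ Q, (1 - Cmat s n k)) = 1 - ∏ n ∈ Q, (1 - p n k) := by
      intro k
      have h1 := Stmt7Aux.sum_bern_prod p Q k
      calc ∑ s : ChanState N K 1, bernoulliPi p s * (1 - ∏ n ∈ Q, (1 - Cmat s n k))
          = (∑ s : ChanState N K 1, bernoulliPi p s)
            - ∑ s : ChanState N K 1, bernoulliPi p s * ∏ n ∈ Q, (1 - Cmat s n k) := by
            rw [← Finset.sum_sub_distrib]
            exact Finset.sum_congr rfl fun s _ => by ring
        _ = 1 - ∏ n ∈ Q, (1 - p n k) := by rw [hone, h1]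
    rw [Finset.sum_congr rfl fun k _ => hterm k, Finset.sum_sub_distrib]
    simp
  set xq : ℕ → ℝ := fun t => ∑ n ∈ Q, ∫ ω, X t ω n ∂μ with hxq
  set aq : ℕ → ℝ := fun t => ∑ n ∈ Q, ∫ ω, A t ω n ∂μ with haq
  have hxq_nn : ∀ t, 0 ≤ xq t := fun t =>
    Finset.sum_nonneg fun n _ => integral_nonneg fun ω => hXnn t ω n
  have hstep : ∀ t, xq t + aq (t+1) - c ≤ xq (t+1) := by
    intro t
    have hn : ∀ n, (∫ ω, X t ω n ∂μ) - (∫ ω, D (t+1) ω n ∂μ) + (∫ ω, A (t+1) ω n ∂μ)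
        ≤ ∫ ω, X (t+1) ω n ∂μ := by
      intro n
      have hpt : ∀ ω, X t ω n - D (t+1) ω n + A (t+1) ω n ≤ X (t+1) ω n := by
        intro ω
        rw [hXrec (t+1) (Nat.le_add_left 1 t) ω n]
        simp only [Nat.add_sub_cancel]
        have h1 := le_max_left (X t ω n - ∑ k, Cmat (Cch (t+1) ω) n k * allocMat (Ipol (t+1) ω) n k) (0:ℝ)
        simp only [hD]
        linarith
      have key : ∫ ω, (X t ω n - D (t+1) ω n + A (t+1) ω n) ∂μ
          = (∫ ω, X t ω n ∂μ) - (∫ ω, D (t+1) ω n ∂μ) + (∫ ω, A (t+1) ω n ∂μ) := by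
        rw [integral_add (f := fun ω => X t ω n - D (t+1) ω n)
            (g := fun ω => A (t+1) ω n)
            ((hXint t n).sub (hDint (t+1) n)) (hAint (t+1) n),
          integral_sub (f := fun ω => X t ω n) (g := fun ω => D (t+1) ω n)
            (hXint t n) (hDint (t+1) n)]
      have hmono := integral_mono (μ := μ)
        (f := fun ω => X t ω n - D (t+1) ω n + A (t+1) ω n)
        (g := fun ω => X (t+1) ω n)
        (((hXint t n).sub (hDint (t+1) n)).add (hAint (t+1) n)) (hXint (t+1) n) hpt
      linarith [key, hmono]
    have hsum := Finset.sum_le_sum fun n (_ : n ∈ Q) => hn n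
    have hE := hEserv (t+1) (Nat.le_add_left 1 t)
    simp only [Finset.sum_add_distrib, Finset.sum_sub_distrib] at hsum
    simp only [hxq, haq]
    linarith
  have htel : ∀ t : ℕ, (∑ τ ∈ Finset.Icc 1 t, aq τ) - t * c ≤ xq t := by
    intro t
    induction t with
    | zero => simpa using hxq_nn 0
    | succ t ih =>
      have hsum : ∑ τ ∈ Finset.Icc 1 (t+1), aq τ
          = (∑ τ ∈ Finset.Icc 1 t, aq τ) + aq (t+1) :=
        Finset.sum_Icc_succ_top (Nat.le_add_left 1 t) aq
      have h1 := hstep t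
      rw [hsum]
      push_cast at ih ⊢
      linarith
  choose B hB using hstable
  set Bt : ℝ := ∑ n ∈ Q, B n with hBt
  have hstab : ∀ t : ℕ, 1 ≤ t → (∑ τ ∈ Finset.range t, xq τ) / t ≤ Bt := by
    intro t ht
    have h1 : (∑ τ ∈ Finset.range t, xq τ) / t
        = ∑ n ∈ Q, (∑ τ ∈ Finset.range t, ∫ ω, X τ ω n ∂μ) / t := by
      rw [← Finset.sum_div]
      congr 1
      exact Finset.sum_comm
    rw [h1]
    exact Finset.sum_le_sum fun n _ => hB n t ht
  have hS : Filter.Tendsto (fun t : ℕ => (∑ τ ∈ Finset.Icc 1 t, aq τ) / t)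
      Filter.atTop (nhds L) := by
    have heq : ∀ t : ℕ, (∑ τ ∈ Finset.Icc 1 t, aq τ) / t
        = ∑ n ∈ Q, (∑ τ ∈ Finset.Icc 1 t, ∫ ω, A τ ω n ∂μ) / t := by
      intro t; rw [← Finset.sum_div]; congr 1; exact Finset.sum_comm
    simp only [heq, hL]
    exact tendsto_finset_sum Q fun n _ => hAbar n
  set ε : ℝ := (L - c) / 2 with hε
  have hεpos : 0 < ε := by rw [hε]; linarith
  have hev : ∀ᶠ t : ℕ in Filter.atTop, c + ε < (∑ τ ∈ Finset.Icc 1 t, aq τ) / t :=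
    hS.eventually (eventually_gt_nhds (by rw [hε]; linarith))
  obtain ⟨t0, ht0⟩ := Filter.eventually_atTop.mp hev
  have hxlow : ∀ t, max t0 1 ≤ t → (t : ℝ) * ε ≤ xq t := by
    intro t ht
    have ht1 : 1 ≤ t := le_trans (le_max_right t0 1) ht
    have htt0 : t0 ≤ t := le_trans (le_max_left t0 1) ht
    have htpos : (0:ℝ) < t := by exact_mod_cast ht1
    have h1 := ht0 t htt0
    rw [lt_div_iff₀ htpos] at h1
    have h3 := htel t
    nlinarith
  set m : ℕ := max (max t0 1) (⌈2 * Bt / ε⌉₊ + 1) with hm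
  have hm1 : max t0 1 ≤ m := le_max_left _ _
  have hm1' : 1 ≤ m := le_trans (le_max_right t0 1) hm1
  have hmB : 2 * Bt / ε < (m : ℝ) := by
    have h1 : (2 * Bt / ε) ≤ (⌈2 * Bt / ε⌉₊ : ℝ) := Nat.le_ceil _
    have h2 : (⌈2 * Bt / ε⌉₊ + 1 : ℕ) ≤ m := le_max_right _ _
    have h3 : ((⌈2 * Bt / ε⌉₊ + 1 : ℕ) : ℝ) ≤ (m:ℝ) := by exact_mod_cast h2
    push_cast at h3
    linarith
  have hTstab := hstab (2*m) (by omega)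
  have hsub : Finset.Icc m (2*m - 1) ⊆ Finset.range (2*m) := by
    intro τ hτ
    rw [Finset.mem_Icc] at hτ
    rw [Finset.mem_range]
    omega
  have hlow1 : ∑ τ ∈ Finset.Icc m (2*m-1), xq τ ≤ ∑ τ ∈ Finset.range (2*m), xq τ :=
    Finset.sum_le_sum_of_subset_of_nonneg hsub fun τ _ _ => hxq_nn τ
  have hlow2 : (m:ℝ) * ((m:ℝ) * ε) ≤ ∑ τ ∈ Finset.Icc m (2*m-1), xq τ := by
    have hcard : (Finset.Icc m (2*m-1)).card = m := by
      rw [Nat.card_Icc]; omega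
    calc (m:ℝ) * ((m:ℝ) * ε) = ∑ _τ ∈ Finset.Icc m (2*m-1), (m:ℝ) * ε := by
          rw [Finset.sum_const, hcard, nsmul_eq_mul]
      _ ≤ ∑ τ ∈ Finset.Icc m (2*m-1), xq τ := by
          refine Finset.sum_le_sum fun τ hτ => ?_
          rw [Finset.mem_Icc] at hτ
          have h1 : max t0 1 ≤ τ := le_trans hm1 hτ.1
          have h2 := hxlow τ h1
          have h3 : (m:ℝ) ≤ (τ:ℝ) := by exact_mod_cast hτ.1
          nlinarith
  have hmpos : (0:ℝ) < (m:ℝ) := by exact_mod_cast hm1'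
  have hcast : ((2*m : ℕ):ℝ) = 2*(m:ℝ) := by push_cast; ring
  have hfinal : (m:ℝ) * ε / 2 ≤ Bt := by
    have h := hTstab
    rw [div_le_iff₀ (by rw [hcast]; linarith)] at h
    rw [hcast] at h
    nlinarith [le_trans hlow2 hlow1]
  rw [div_lt_iff₀ hεpos] at hmB
  linarith
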